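/- Every strongly star-shaped subset of a finite-dimensional normed real vector space is a topological manifold with boundary. -/

import Mathlib

open Set Metric

noncomputable section StarAux

variable {E : Type*} [NormedAddCommGroup E] [NormedSpace ℝ E]

/-- truncated radial function of a star-shaped set -/
def srad (X : Set E) (y : E) : ℝ := sSup {t : ℝ | t ∈ Set.Icc (0:ℝ) 2 ∧ t • y ∈ X}

variable {X : Set E} (h0 : (0:E) ∈ X) (hX : IsClosed X)
  (hss : ∀ x ∈ X, ∀ t ∈ Set.Ico (0:ℝ) 1, t • x ∈ interior X)

section
include h0 hX

lemma srad_set_compact (y : E) : IsCompact {t : ℝ | t ∈ Set.Icc (0:ℝ) 2 ∧ t • y ∈ X} := by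
  apply (isCompact_Icc (a := (0:ℝ)) (b := 2)).of_isClosed_subset
  · have : {t : ℝ | t ∈ Set.Icc (0:ℝ) 2 ∧ t • y ∈ X} =
        Set.Icc (0:ℝ) 2 ∩ (fun t : ℝ => t • y) ⁻¹' X := by
      ext t; simp [Set.mem_setOf_eq]
    rw [this]
    exact isClosed_Icc.inter (hX.preimage (by continuity))
  · exact fun t ht => ht.1

lemma srad_mem (y : E) : srad X y ∈ {t : ℝ | t ∈ Set.Icc (0:ℝ) 2 ∧ t • y ∈ X} :=
  (srad_set_compact h0 hX y).sSup_mem ⟨0, ⟨le_refl 0, by norm_num⟩, by simpa using h0⟩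

lemma srad_nonneg (y : E) : 0 ≤ srad X y := (srad_mem h0 hX y).1.1
lemma srad_le_two (y : E) : srad X y ≤ 2 := (srad_mem h0 hX y).1.2
lemma srad_smul_mem (y : E) : (srad X y) • y ∈ X := (srad_mem h0 hX y).2

lemma le_srad_of_mem {y : E} {t : ℝ} (ht0 : 0 ≤ t) (ht2 : t ≤ 2) (hm : t • y ∈ X) :
    t ≤ srad X y :=
  le_csSup (srad_set_compact h0 hX y).bddAbove ⟨⟨ht0, ht2⟩, hm⟩

lemma one_le_srad_of_mem {y : E} (hy : y ∈ X) : 1 ≤ srad X y :=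
  le_srad_of_mem h0 hX zero_le_one one_le_two (by simpa using hy)

end

section
include h0 hX hss

lemma smul_mem_interior_of_lt_srad {y : E} {t : ℝ} (ht0 : 0 ≤ t) (ht : t < srad X y) :
    t • y ∈ interior X := by
  have hr0 : 0 < srad X y := lt_of_le_of_lt ht0 ht
  have := hss _ (srad_smul_mem h0 hX y) (t / srad X y)
    ⟨div_nonneg ht0 hr0.le, by rwa [div_lt_one hr0]⟩
  rwa [smul_smul, div_mul_cancel₀ _ hr0.ne'] at this

lemma smul_mem_of_le_srad {y : E} {t : ℝ} (ht0 : 0 ≤ t) (ht : t ≤ srad X y) : t • y ∈ X := by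
  rcases eq_or_lt_of_le ht with h | h
  · rw [h]; exact srad_smul_mem h0 hX y
  · exact interior_subset (smul_mem_interior_of_lt_srad h0 hX hss ht0 h)

lemma smul_mem_iff_le_srad {y : E} (hy : srad X y < 2) {t : ℝ} (ht0 : 0 ≤ t) :
    t • y ∈ X ↔ t ≤ srad X y := by
  refine ⟨fun hm => ?_, smul_mem_of_le_srad h0 hX hss ht0⟩
  by_contra hlt
  push_neg at hlt
  rcases le_or_gt t 2 with h2 | h2
  · exact absurd (le_srad_of_mem h0 hX ht0 h2 hm) (not_le.2 hlt)
  · have h2y : (2:ℝ) • y ∈ X := by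
      have := hss _ hm (2 / t) ⟨by positivity, by rw [div_lt_one (by linarith)]; linarith⟩
      rw [smul_smul, div_mul_cancel₀ _ (by linarith : t ≠ 0)] at this
      exact interior_subset this
    have := le_srad_of_mem h0 hX (by norm_num) le_rfl h2y
    linarith

lemma mem_iff_one_le_srad {y : E} : y ∈ X ↔ 1 ≤ srad X y :=
  ⟨one_le_srad_of_mem h0 hX, fun h => by
    simpa using smul_mem_of_le_srad h0 hX hss zero_le_one h⟩

lemma srad_smul {y : E} (hy : srad X y < 2) {c : ℝ} (hc : 0 < c) :
    srad X (c • y) = min 2 (srad X y / c) := by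
  have hset : {t : ℝ | t ∈ Set.Icc (0:ℝ) 2 ∧ t • c • y ∈ X} =
      Set.Icc 0 (min 2 (srad X y / c)) := by
    ext t
    simp only [Set.mem_setOf_eq, Set.mem_Icc, le_min_iff]
    constructor
    · rintro ⟨⟨ht0, ht2⟩, hm⟩
      rw [smul_smul] at hm
      have := (smul_mem_iff_le_srad h0 hX hss hy (by positivity)).1 hm
      exact ⟨ht0, ht2, by rw [le_div_iff₀ hc]; linarith [mul_comm t c]⟩
    · rintro ⟨ht0, ht2, htd⟩
      refine ⟨⟨ht0, ht2⟩, ?_⟩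
      rw [smul_smul]
      refine smul_mem_of_le_srad h0 hX hss (by positivity) ?_
      rw [le_div_iff₀ hc] at htd
      linarith [mul_comm t c]
  rw [srad, hset, csSup_Icc]
  exact le_min (by norm_num) (div_nonneg (srad_nonneg h0 hX y) hc.le)

lemma eventually_srad_lt {y₀ : E} {c : ℝ} (hc2 : c ≤ 2) (hlt : srad X y₀ < c) :
    ∀ᶠ y in nhds y₀, srad X y < c := by
  have hc0 : 0 ≤ c := le_trans (srad_nonneg h0 hX y₀) hlt.le
  have hopen : IsOpen {y : E | c • y ∉ X} :=
    (hX.preimage (continuous_const_smul c)).isOpen_compl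
  have hy₀ : c • y₀ ∉ X := fun hm => absurd (le_srad_of_mem h0 hX hc0 hc2 hm) (not_le.2 hlt)
  filter_upwards [hopen.mem_nhds hy₀] with y hy
  by_contra hge
  exact hy (smul_mem_of_le_srad h0 hX hss hc0 (not_lt.1 hge))

lemma eventually_lt_srad {y₀ : E} {c : ℝ} (hlt : c < srad X y₀) :
    ∀ᶠ y in nhds y₀, c < srad X y := by
  rcases lt_or_ge c 0 with hc | hc
  · filter_upwards with y; exact lt_of_lt_of_le hc (srad_nonneg h0 hX y)
  · set c' : ℝ := (c + srad X y₀) / 2 with hc'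
    have hcc' : c < c' := by simp only [hc']; linarith
    have hc'r : c' < srad X y₀ := by simp only [hc']; linarith
    have hc'2 : c' ≤ 2 := le_trans hc'r.le (srad_le_two h0 hX y₀)
    have hopen : IsOpen {y : E | c' • y ∈ interior X} :=
      isOpen_interior.preimage (continuous_const_smul c')
    have hy₀ : c' • y₀ ∈ interior X :=
      smul_mem_interior_of_lt_srad h0 hX hss (by linarith) hc'r
    filter_upwards [hopen.mem_nhds hy₀] with y hy
    exact lt_of_lt_of_le hcc' (le_srad_of_mem h0 hX (by linarith) hc'2 (interior_subset hy))

lemma srad_continuousAt {y₀ : E} (hy : srad X y₀ < 2) : ContinuousAt (srad X) y₀ := by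
  rw [ContinuousAt, tendsto_order]
  constructor
  · exact fun a ha => eventually_lt_srad h0 hX hss ha
  · intro b hb
    have : srad X y₀ < min b 2 := lt_min hb hy
    filter_upwards [eventually_srad_lt h0 hX hss (min_le_right _ _) this] with y hyy
    exact lt_of_lt_of_le hyy (min_le_left _ _)

end

end StarAux

open Set Metric

noncomputable section HouseholderAux

variable {F : Type*} [NormedAddCommGroup F] [InnerProductSpace ℝ F]

/-- Householder-type reflection along `d`. -/
def hhr (d : F) (x : F) : F := x - (2 * (inner ℝ x d : ℝ) / (inner ℝ d d : ℝ)) • d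

lemma continuous_hhr (d : F) : Continuous (hhr d) := by
  unfold hhr
  have h1 : Continuous fun x : F => (inner ℝ x d : ℝ) := continuous_id.inner continuous_const
  fun_prop

lemma hhr_invol (d : F) (x : F) : hhr d (hhr d x) = x := by
  by_cases h : d = 0
  · simp [hhr, h]
  · have hdd : (inner ℝ d d : ℝ) ≠ 0 := by
      simpa using (inner_self_ne_zero (𝕜 := ℝ) (x := d)).2 h
    have key : (inner ℝ (hhr d x) d : ℝ) = -(inner ℝ x d : ℝ) := by
      rw [hhr, inner_sub_left, real_inner_smul_left]
      field_simp
      ring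
    rw [hhr, key, hhr]
    have : 2 * -(inner ℝ x d : ℝ) / (inner ℝ d d : ℝ) = -(2 * (inner ℝ x d : ℝ) / (inner ℝ d d : ℝ)) := by
      ring
    rw [this, neg_smul, sub_neg_eq_add, sub_add_cancel]

lemma hhr_selfadj (d a b : F) : (inner ℝ (hhr d a) b : ℝ) = (inner ℝ a (hhr d b) : ℝ) := by
  simp only [hhr, inner_sub_left, inner_sub_right, real_inner_smul_left, real_inner_smul_right]
  rw [real_inner_comm b d]
  ring

variable {u e : F} (hu : ‖u‖ = 1) (he : ‖e‖ = 1)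

include hu he

lemma hhr_d_sq : (inner ℝ (u - e) (u - e) : ℝ) = 2 - 2 * (inner ℝ u e : ℝ) := by
  have h1 : (inner ℝ u u : ℝ) = 1 := by rw [real_inner_self_eq_norm_sq, hu]; norm_num
  have h2 : (inner ℝ e e : ℝ) = 1 := by rw [real_inner_self_eq_norm_sq, he]; norm_num
  have h3 : (inner ℝ e u : ℝ) = (inner ℝ u e : ℝ) := real_inner_comm _ _
  rw [inner_sub_left, inner_sub_right, inner_sub_right, h1, h2, h3]
  ring

lemma hhr_apply_u : hhr (u - e) u = e := by
  by_cases h : u - e = 0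
  · rw [sub_eq_zero] at h
    subst h
    simp [hhr]
  · have hdd : (inner ℝ (u - e) (u - e) : ℝ) ≠ 0 := by
      simpa using (inner_self_ne_zero (𝕜 := ℝ) (x := u - e)).2 h
    have hud : (inner ℝ u (u - e) : ℝ) = (inner ℝ (u - e) (u - e) : ℝ) / 2 := by
      rw [hhr_d_sq hu he, inner_sub_right]
      rw [real_inner_self_eq_norm_sq, hu]
      ring_nf
    rw [hhr, hud]
    have hc : 2 * ((inner ℝ (u - e) (u - e) : ℝ) / 2) / (inner ℝ (u - e) (u - e) : ℝ) = 1 := by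
      field_simp
    rw [hc, one_smul]
    abel

lemma hhr_inner_e (x : F) : (inner ℝ e (hhr (u - e) x) : ℝ) = (inner ℝ u x : ℝ) := by
  by_cases h : u - e = 0
  · rw [sub_eq_zero] at h
    subst h
    simp [hhr]
  · have hdd : (inner ℝ (u - e) (u - e) : ℝ) ≠ 0 := by
      simpa using (inner_self_ne_zero (𝕜 := ℝ) (x := u - e)).2 h
    have hed : (inner ℝ e (u - e) : ℝ) = -(inner ℝ (u - e) (u - e) : ℝ) / 2 := by
      rw [hhr_d_sq hu he, inner_sub_right]
      rw [real_inner_self_eq_norm_sq, he]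
      rw [real_inner_comm e u]
      ring_nf
    rw [hhr, inner_sub_right, real_inner_smul_right, hed]
    have hxd : (inner ℝ x (u - e) : ℝ) = (inner ℝ x u : ℝ) - (inner ℝ x e : ℝ) := inner_sub_right _ _ _
    rw [hxd]
    rw [real_inner_comm e x, real_inner_comm u x]
    field_simp
    ring

end HouseholderAux

noncomputable section EucAux

variable {n : ℕ} [NeZero n]

local notation "E" => EuclideanSpace ℝ (Fin n)

def e₀ : EuclideanSpace ℝ (Fin n) := EuclideanSpace.single (0 : Fin n) (1:ℝ)

lemma inner_e₀ (x : EuclideanSpace ℝ (Fin n)) : (inner ℝ (e₀ : E) x : ℝ) = x 0 := by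
  simp [e₀, EuclideanSpace.inner_single_left]

lemma norm_e₀ : ‖(e₀ : E)‖ = 1 := by simp [e₀]

lemma abs_coord_le_norm (x : EuclideanSpace ℝ (Fin n)) : |x 0| ≤ ‖x‖ := by
  calc |x 0| = |(inner ℝ (e₀ : E) x : ℝ)| := by rw [inner_e₀]
  _ ≤ ‖(e₀ : E)‖ * ‖x‖ := abs_real_inner_le_norm _ _
  _ = ‖x‖ := by rw [norm_e₀, one_mul]

lemma add_smul_e₀_coord (x : EuclideanSpace ℝ (Fin n)) (c : ℝ) :
    (x + c • e₀ : EuclideanSpace ℝ (Fin n)) 0 = x 0 + c := by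
  simp [e₀, EuclideanSpace.single_apply]

/-- clamp the 0-th coordinate to be nonnegative -/
def clamp (x : EuclideanSpace ℝ (Fin n)) : EuclideanSpace ℝ (Fin n) :=
  x + (max 0 (x 0) - x 0) • e₀

lemma clamp_coord (x : EuclideanSpace ℝ (Fin n)) : clamp x 0 = max 0 (x 0) := by
  rw [clamp, add_smul_e₀_coord]; ring

lemma clamp_nonneg (x : EuclideanSpace ℝ (Fin n)) : 0 ≤ clamp x 0 := by
  rw [clamp_coord]; exact le_max_left _ _

lemma clamp_of_nonneg {x : EuclideanSpace ℝ (Fin n)} (hx : 0 ≤ x 0) : clamp x = x := by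
  rw [clamp, max_eq_right hx]; simp

lemma continuous_clamp : Continuous (clamp (n := n)) := by
  unfold clamp
  fun_prop

/-- The affine "flip" `x ↦ x + (m - 2 x₀) e₀`, an involution with `(T x) 0 = m - x 0`. -/
def flipT (m : ℝ) (x : EuclideanSpace ℝ (Fin n)) : EuclideanSpace ℝ (Fin n) :=
  x + (m - 2 * x 0) • e₀

lemma flipT_coord (m : ℝ) (x : EuclideanSpace ℝ (Fin n)) : flipT m x 0 = m - x 0 := by
  rw [flipT, add_smul_e₀_coord]; ring

lemma flipT_flipT (m : ℝ) (x : EuclideanSpace ℝ (Fin n)) : flipT m (flipT m x) = x := by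
  simp only [flipT]
  rw [add_smul_e₀_coord]
  module

lemma continuous_flipT (m : ℝ) : Continuous (flipT (n := n) m) := by
  unfold flipT
  have : Continuous fun x : EuclideanSpace ℝ (Fin n) => x 0 :=
    (EuclideanSpace.proj (0 : Fin n)).continuous
  fun_prop

end EucAux

noncomputable section ChartAux

variable {n : ℕ} [NeZero n]

local notation "E" => EuclideanSpace ℝ (Fin n)
local notation "H" => EuclideanHalfSpace n

open Classical in
/-- Generic builder for charts on a subset of Euclidean space, valued in the half-space. -/
def subtypeChart (X : Set (EuclideanSpace ℝ (Fin n))) (z₀ : ↥X) (f g : EuclideanSpace ℝ (Fin n) → EuclideanSpace ℝ (Fin n))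
    (O U : Set (EuclideanSpace ℝ (Fin n)))
    (hO : IsOpen O) (hU : IsOpen U)
    (hf : ContinuousOn f O) (hg : ContinuousOn g U)
    (hfU : ∀ y ∈ O, y ∈ X → f y ∈ U)
    (hf0 : ∀ y ∈ O, y ∈ X → 0 ≤ f y 0)
    (hgO : ∀ v ∈ U, 0 ≤ v 0 → g v ∈ O)
    (hgX : ∀ v ∈ U, 0 ≤ v 0 → g v ∈ X)
    (hgf : ∀ y ∈ O, y ∈ X → g (f y) = y)
    (hfg : ∀ v ∈ U, 0 ≤ v 0 → f (g v) = v) :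
    OpenPartialHomeomorph (↥X) (EuclideanHalfSpace n) where
  toFun y := ⟨clamp (f y.1), clamp_nonneg _⟩
  invFun p := if h : g p.1 ∈ X then ⟨g p.1, h⟩ else z₀
  source := Subtype.val ⁻¹' O
  target := {p : EuclideanHalfSpace n | p.1 ∈ U}
  map_source' := by
    intro y hy
    have h1 : clamp (f y.1) = f y.1 := clamp_of_nonneg (hf0 _ hy y.2)
    simp only [Set.mem_setOf_eq, h1]
    exact hfU _ hy y.2
  map_target' := by
    intro p hp
    have h1 : g p.1 ∈ X := hgX _ hp p.2
    simp only [Set.mem_preimage, dif_pos h1]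
    exact hgO _ hp p.2
  left_inv' := by
    intro y hy
    have h1 : clamp (f y.1) = f y.1 := clamp_of_nonneg (hf0 _ hy y.2)
    have h2 : g (f y.1) = y.1 := hgf _ hy y.2
    apply Subtype.ext
    simp only [h1, h2, dif_pos y.2]
  right_inv' := by
    intro p hp
    have h1 : g p.1 ∈ X := hgX _ hp p.2
    have h2 : f (g p.1) = p.1 := hfg _ hp p.2
    simp only [dif_pos h1]
    apply EuclideanHalfSpace.ext
    simp only [h2]
    exact clamp_of_nonneg p.2
  open_source := hO.preimage continuous_subtype_val
  open_target :=
    hU.preimage (continuous_subtype_val : Continuous (Subtype.val : EuclideanHalfSpace n → _))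
  continuousOn_toFun := by
    apply (Topology.IsInducing.subtypeVal (t := {x : EuclideanSpace ℝ (Fin n) | 0 ≤ x 0})).continuousOn_iff.mpr
    have : ContinuousOn (fun y : ↥X => clamp (f y.1)) (Subtype.val ⁻¹' O) := by
      apply continuous_clamp.comp_continuousOn
      exact hf.comp continuous_subtype_val.continuousOn (fun y hy => hy)
    exact this
  continuousOn_invFun := by
    apply (Topology.IsInducing.subtypeVal (t := X)).continuousOn_iff.mpr
    have hbase : ContinuousOn (fun p : EuclideanHalfSpace n => g p.1)
        {p : EuclideanHalfSpace n | p.1 ∈ U} := by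
      apply hg.comp
      · exact Continuous.continuousOn (by exact continuous_subtype_val)
      · exact fun p hp => hp
    apply hbase.congr
    intro p hp
    simp only [Function.comp, dif_pos (hgX _ hp p.2)]

lemma subtypeChart_source (X : Set (EuclideanSpace ℝ (Fin n))) (z₀ : ↥X) (f g : EuclideanSpace ℝ (Fin n) → EuclideanSpace ℝ (Fin n))
    (O U : Set (EuclideanSpace ℝ (Fin n)))
    (hO : IsOpen O) (hU : IsOpen U) (hf : ContinuousOn f O) (hg : ContinuousOn g U)
    (hfU : ∀ y ∈ O, y ∈ X → f y ∈ U) (hf0 : ∀ y ∈ O, y ∈ X → 0 ≤ f y 0)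
    (hgO : ∀ v ∈ U, 0 ≤ v 0 → g v ∈ O) (hgX : ∀ v ∈ U, 0 ≤ v 0 → g v ∈ X)
    (hgf : ∀ y ∈ O, y ∈ X → g (f y) = y) (hfg : ∀ v ∈ U, 0 ≤ v 0 → f (g v) = v) :
    (subtypeChart X z₀ f g O U hO hU hf hg hfU hf0 hgO hgX hgf hfg).source
      = Subtype.val ⁻¹' O := rfl


section IntChart

variable (X : Set (EuclideanSpace ℝ (Fin n))) (z₀ : ↥X) {z : EuclideanSpace ℝ (Fin n)} {r : ℝ}

/-- Interior chart: translation of a small ball into the open half-space. -/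
def intChart (hr : 0 < r) (hball : Metric.ball z r ⊆ interior X) :
    OpenPartialHomeomorph (↥X) (EuclideanHalfSpace n) := by
  refine subtypeChart X z₀ (fun y => y - z + (r+1) • e₀) (fun v => v - (r+1) • e₀ + z)
    (Metric.ball z r) (Metric.ball ((r+1) • e₀) r) Metric.isOpen_ball Metric.isOpen_ball
    (by fun_prop) (by fun_prop) ?_ ?_ ?_ ?_ ?_ ?_
  · intro y hy _
    rw [Metric.mem_ball] at hy ⊢
    rw [dist_eq_norm] at hy ⊢
    convert hy using 2
    abel
  · intro y hy _
    rw [Metric.mem_ball, dist_eq_norm] at hy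
    have h1 : (y - z + (r+1) • e₀ : EuclideanSpace ℝ (Fin n)) 0 = (y - z : EuclideanSpace ℝ (Fin n)) 0 + (r+1) := by
      rw [add_smul_e₀_coord]
    have h2 : |(y - z : EuclideanSpace ℝ (Fin n)) 0| ≤ ‖(y - z : EuclideanSpace ℝ (Fin n))‖ :=
      abs_coord_le_norm _
    have h3 := abs_le.1 h2
    show 0 ≤ (y - z + (r+1) • e₀ : EuclideanSpace ℝ (Fin n)) 0
    rw [h1]
    linarith
  · intro v hv _
    rw [Metric.mem_ball, dist_eq_norm] at hv ⊢
    convert hv using 2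
    abel
  · intro v hv _
    rw [Metric.mem_ball, dist_eq_norm] at hv
    apply interior_subset
    apply hball
    rw [Metric.mem_ball, dist_eq_norm]
    convert hv using 2
    abel
  · intro y _ _; module
  · intro v _ _; module

lemma mem_intChart_source (hr : 0 < r) (hball : Metric.ball z r ⊆ interior X) (hz : z ∈ X) :
    (⟨z, hz⟩ : ↥X) ∈ (intChart X z₀ hr hball).source := by
  show z ∈ Metric.ball z r
  exact Metric.mem_ball_self hr

end IntChart


section BdChart

variable (X : Set (EuclideanSpace ℝ (Fin n))) (z : EuclideanSpace ℝ (Fin n))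

/-- normalized linear functional in direction `z` -/
def lpr (y : EuclideanSpace ℝ (Fin n)) : ℝ := (inner ℝ ((‖z‖)⁻¹ • z) y : ℝ) / ‖z‖

/-- radial straightening map -/
def gmap (y : EuclideanSpace ℝ (Fin n)) : EuclideanSpace ℝ (Fin n) :=
  (lpr z y * srad X y)⁻¹ • y

/-- inverse of the radial straightening map -/
def gmapInv (v : EuclideanSpace ℝ (Fin n)) : EuclideanSpace ℝ (Fin n) :=
  srad X ((lpr z v)⁻¹ • v) • v

def bdO : Set (EuclideanSpace ℝ (Fin n)) :=
  {y | lpr z y ∈ Set.Ioo (3/4 : ℝ) (5/4) ∧ srad X y ∈ Set.Ioo (3/4 : ℝ) (5/4)}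

def bdW : Set (EuclideanSpace ℝ (Fin n)) :=
  {v | lpr z v ∈ Set.Ioo (4/5 : ℝ) (4/3) ∧
    srad X ((lpr z v)⁻¹ • v) ∈ Set.Ioo (1/2 : ℝ) (8/5)}

def bdT : Set (EuclideanSpace ℝ (Fin n)) := bdW X z ∩ gmapInv X z ⁻¹' bdO X z

lemma continuous_lpr : Continuous (lpr (n := n) z) := by
  unfold lpr
  have : Continuous fun y : EuclideanSpace ℝ (Fin n) => (inner ℝ ((‖z‖)⁻¹ • z) y : ℝ) :=
    continuous_const.inner continuous_id
  fun_prop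

lemma lpr_smul (a : ℝ) (y : EuclideanSpace ℝ (Fin n)) : lpr z (a • y) = a * lpr z y := by
  unfold lpr
  rw [real_inner_smul_right]
  ring

lemma lpr_self (hz : z ≠ 0) : lpr z z = 1 := by
  unfold lpr
  rw [real_inner_smul_left, real_inner_self_eq_norm_sq]
  have hz' : ‖z‖ ≠ 0 := norm_ne_zero_iff.2 hz
  field_simp

variable {X}
variable (h0 : (0:EuclideanSpace ℝ (Fin n)) ∈ X) (hX : IsClosed X)
  (hss : ∀ x ∈ X, ∀ t ∈ Set.Ico (0:ℝ) 1, t • x ∈ interior X)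

include h0 hX hss

lemma isOpen_srad_Ioo {a b : ℝ} (hb : b ≤ 2) :
    IsOpen {y : EuclideanSpace ℝ (Fin n) | srad X y ∈ Set.Ioo a b} := by
  rw [isOpen_iff_mem_nhds]
  intro y hy
  have h1 := eventually_lt_srad h0 hX hss hy.1
  have h2 := eventually_srad_lt h0 hX hss hb hy.2
  filter_upwards [h1, h2] with w hw1 hw2
  exact ⟨hw1, hw2⟩

lemma continuousOn_srad_lt {S : Set (EuclideanSpace ℝ (Fin n))} (hS : ∀ y ∈ S, srad X y < 2) :
    ContinuousOn (srad X) S := fun y hy =>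
  (srad_continuousAt h0 hX hss (hS y hy)).continuousWithinAt

lemma bdO_open : IsOpen (bdO X z) := by
  have h1 : IsOpen {y : EuclideanSpace ℝ (Fin n) | lpr z y ∈ Set.Ioo (3/4 : ℝ) (5/4)} :=
    isOpen_Ioo.preimage (continuous_lpr z)
  have h2 := isOpen_srad_Ioo (a := (3/4:ℝ)) (b := (5/4:ℝ)) h0 hX hss (by norm_num)
  exact h1.inter h2

lemma bdW_open : IsOpen (bdW X z) := by
  have h1 : IsOpen {v : EuclideanSpace ℝ (Fin n) | lpr z v ∈ Set.Ioo (4/5 : ℝ) (4/3)} :=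
    isOpen_Ioo.preimage (continuous_lpr z)
  have h2 : ContinuousOn (fun v => (lpr z v)⁻¹ • v)
      {v : EuclideanSpace ℝ (Fin n) | lpr z v ∈ Set.Ioo (4/5 : ℝ) (4/3)} := by
    refine ContinuousOn.smul (f := fun v => (lpr z v)⁻¹) (g := fun v => v) ?_ ?_
    · exact ((continuous_lpr z).continuousOn).inv₀ (fun v hv => by
        have : (4/5 : ℝ) < lpr z v := hv.1
        linarith)
    · exact continuousOn_id
  have h3 := isOpen_srad_Ioo (a := (1/2:ℝ)) (b := (8/5:ℝ)) h0 hX hss (by norm_num)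
  have : bdW X z = {v : EuclideanSpace ℝ (Fin n) | lpr z v ∈ Set.Ioo (4/5 : ℝ) (4/3)} ∩
      (fun v => (lpr z v)⁻¹ • v) ⁻¹' {y | srad X y ∈ Set.Ioo (1/2 : ℝ) (8/5)} := rfl
  rw [this]
  exact h2.isOpen_inter_preimage h1 h3

lemma continuousOn_gmapInv : ContinuousOn (gmapInv X z) (bdW X z) := by
  have h2 : ContinuousOn (fun v => (lpr z v)⁻¹ • v) (bdW X z) := by
    refine ContinuousOn.smul (f := fun v => (lpr z v)⁻¹) (g := fun v => v) ?_ ?_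
    · exact ((continuous_lpr z).continuousOn).inv₀ (fun v hv => by
        have : (4/5 : ℝ) < lpr z v := hv.1.1
        linarith)
    · exact continuousOn_id
  have h3 : ContinuousOn (fun v => srad X ((lpr z v)⁻¹ • v)) (bdW X z) := by
    apply (continuousOn_srad_lt h0 hX hss (S := {y | srad X y < 2}) (fun y hy => hy)).comp h2
    intro v hv
    have : srad X ((lpr z v)⁻¹ • v) < 8/5 := hv.2.2
    show srad X ((lpr z v)⁻¹ • v) < 2
    linarith
  exact h3.smul continuousOn_id

lemma bdT_open : IsOpen (bdT X z) := by
  apply (continuousOn_gmapInv z h0 hX hss).isOpen_inter_preimage (bdW_open z h0 hX hss)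
    (bdO_open z h0 hX hss)

lemma continuousOn_gmap : ContinuousOn (gmap X z) (bdO X z) := by
  have h1 : ContinuousOn (srad X) (bdO X z) :=
    continuousOn_srad_lt h0 hX hss (fun y hy => by
      have : srad X y < 5/4 := hy.2.2; linarith)
  have h2 : ContinuousOn (fun y => (lpr z y * srad X y)⁻¹) (bdO X z) := by
    apply ContinuousOn.inv₀ (((continuous_lpr z).continuousOn).mul h1)
    intro y hy
    have ha : (3/4 : ℝ) < lpr z y := hy.1.1
    have hb : (3/4 : ℝ) < srad X y := hy.2.1
    exact (mul_pos (by linarith) (by linarith)).ne'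
  exact h2.smul continuousOn_id


section Computations

variable {z : EuclideanSpace ℝ (Fin n)}

omit h0 hX hss in
lemma bdO_facts {y : EuclideanSpace ℝ (Fin n)} (hy : y ∈ bdO X z) :
    (3/4 : ℝ) < lpr z y ∧ lpr z y < 5/4 ∧ (3/4 : ℝ) < srad X y ∧ srad X y < 5/4 :=
  ⟨hy.1.1, hy.1.2, hy.2.1, hy.2.2⟩

omit h0 hX hss in
lemma lpr_gmap {y : EuclideanSpace ℝ (Fin n)} (hy : y ∈ bdO X z) :
    lpr z (gmap X z y) = (srad X y)⁻¹ := by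
  obtain ⟨h1, h2, h3, h4⟩ := bdO_facts hy
  rw [gmap, lpr_smul]
  field_simp

omit h0 hX hss in
lemma smul_gmap_eq {y : EuclideanSpace ℝ (Fin n)} (hy : y ∈ bdO X z) :
    (lpr z (gmap X z y))⁻¹ • gmap X z y = (lpr z y)⁻¹ • y := by
  obtain ⟨h1, h2, h3, h4⟩ := bdO_facts hy
  rw [lpr_gmap hy, gmap, smul_smul, inv_inv]
  congr 1
  rw [mul_comm (lpr z y) (srad X y)]
  field_simp

lemma srad_inv_lpr_smul {y : EuclideanSpace ℝ (Fin n)} (hy : y ∈ bdO X z) :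
    srad X ((lpr z y)⁻¹ • y) = lpr z y * srad X y := by
  obtain ⟨h1, h2, h3, h4⟩ := bdO_facts hy
  rw [srad_smul h0 hX hss (by linarith) (by positivity), div_inv_eq_mul]
  rw [min_eq_right (by nlinarith)]
  ring

lemma gmapInv_gmap {y : EuclideanSpace ℝ (Fin n)} (hy : y ∈ bdO X z) :
    gmapInv X z (gmap X z y) = y := by
  obtain ⟨h1, h2, h3, h4⟩ := bdO_facts hy
  rw [gmapInv, smul_gmap_eq hy, srad_inv_lpr_smul h0 hX hss hy, gmap, smul_smul]
  have : lpr z y * srad X y * (lpr z y * srad X y)⁻¹ = 1 := by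
    field_simp
  rw [this, one_smul]

lemma gmap_mem_bdW {y : EuclideanSpace ℝ (Fin n)} (hy : y ∈ bdO X z) :
    gmap X z y ∈ bdW X z := by
  obtain ⟨h1, h2, h3, h4⟩ := bdO_facts hy
  constructor
  · rw [lpr_gmap hy]
    constructor
    · rw [lt_inv_comm₀ (by norm_num) (by linarith)]
      linarith
    · rw [inv_lt_comm₀ (by linarith) (by norm_num)]
      linarith
  · rw [smul_gmap_eq hy, srad_inv_lpr_smul h0 hX hss hy]
    constructor <;> nlinarith

lemma gmap_mem_bdT {y : EuclideanSpace ℝ (Fin n)} (hy : y ∈ bdO X z) :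
    gmap X z y ∈ bdT X z :=
  ⟨gmap_mem_bdW h0 hX hss hy, by
    simp only [Set.mem_preimage, gmapInv_gmap h0 hX hss hy]
    exact hy⟩

omit h0 hX hss in
lemma bdW_facts {v : EuclideanSpace ℝ (Fin n)} (hv : v ∈ bdW X z) :
    (4/5 : ℝ) < lpr z v ∧ lpr z v < 4/3 ∧ (1/2 : ℝ) < srad X ((lpr z v)⁻¹ • v) ∧
      srad X ((lpr z v)⁻¹ • v) < 8/5 :=
  ⟨hv.1.1, hv.1.2, hv.2.1, hv.2.2⟩

lemma srad_bdW {v : EuclideanSpace ℝ (Fin n)} (hv : v ∈ bdW X z) :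
    srad X v = srad X ((lpr z v)⁻¹ • v) / lpr z v := by
  obtain ⟨h1, h2, h3, h4⟩ := bdW_facts hv
  have hkey : srad X (lpr z v • (lpr z v)⁻¹ • v) = min 2 (srad X ((lpr z v)⁻¹ • v) / lpr z v) :=
    srad_smul h0 hX hss (by linarith) (by linarith)
  rw [smul_smul, mul_inv_cancel₀ (by linarith), one_smul] at hkey
  rw [hkey, min_eq_right]
  rw [div_le_iff₀ (by linarith)]
  nlinarith

omit h0 hX hss in
lemma lpr_gmapInv {v : EuclideanSpace ℝ (Fin n)} (hv : v ∈ bdW X z) :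
    lpr z (gmapInv X z v) = srad X ((lpr z v)⁻¹ • v) * lpr z v := by
  rw [gmapInv, lpr_smul]

lemma srad_gmapInv {v : EuclideanSpace ℝ (Fin n)} (hv : v ∈ bdW X z) :
    srad X (gmapInv X z v) = (lpr z v)⁻¹ := by
  obtain ⟨h1, h2, h3, h4⟩ := bdW_facts hv
  have hv2 : srad X v < 2 := by
    rw [srad_bdW h0 hX hss hv]
    rw [div_lt_iff₀ (by linarith)]
    nlinarith
  rw [gmapInv, srad_smul h0 hX hss hv2 (by linarith), srad_bdW h0 hX hss hv]
  have heq : srad X ((lpr z v)⁻¹ • v) / lpr z v / srad X ((lpr z v)⁻¹ • v) = (lpr z v)⁻¹ := by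
    rw [div_right_comm, div_self (by linarith), one_div]
  rw [heq, min_eq_right]
  rw [inv_le_comm₀ (by linarith) (by norm_num)]
  linarith

lemma gmap_gmapInv {v : EuclideanSpace ℝ (Fin n)} (hv : v ∈ bdW X z) :
    gmap X z (gmapInv X z v) = v := by
  obtain ⟨h1, h2, h3, h4⟩ := bdW_facts hv
  rw [gmap, lpr_gmapInv hv, srad_gmapInv h0 hX hss hv, gmapInv, smul_smul]
  have heq : srad X ((lpr z v)⁻¹ • v) * lpr z v * (lpr z v)⁻¹ = srad X ((lpr z v)⁻¹ • v) := by
    field_simp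
  rw [heq, inv_mul_cancel₀ (by linarith), one_smul]

lemma gmapInv_mem_X_iff {v : EuclideanSpace ℝ (Fin n)} (hv : v ∈ bdW X z) :
    (gmapInv X z v ∈ X ↔ lpr z v ≤ 1) := by
  obtain ⟨h1, h2, h3, h4⟩ := bdW_facts hv
  rw [mem_iff_one_le_srad h0 hX hss, srad_gmapInv h0 hX hss hv]
  rw [le_inv_comm₀ (by norm_num) (by linarith), inv_one]

end Computations


section TheChart

variable {z : EuclideanSpace ℝ (Fin n)}

omit h0 hX hss in
lemma hhr_coord0 {u : EuclideanSpace ℝ (Fin n)} (hu : ‖u‖ = 1) (x : EuclideanSpace ℝ (Fin n)) :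
    hhr (u - e₀) x 0 = (inner ℝ u x : ℝ) := by
  rw [← hhr_inner_e hu norm_e₀ x, inner_e₀]

omit h0 hX hss in
lemma inner_u_hhr {u : EuclideanSpace ℝ (Fin n)} (hu : ‖u‖ = 1) (x : EuclideanSpace ℝ (Fin n)) :
    (inner ℝ u (hhr (u - e₀) x) : ℝ) = x 0 := by
  rw [← hhr_selfadj, hhr_apply_u hu norm_e₀, inner_e₀]

omit h0 hX hss in
lemma inner_u_eq_lpr (hz0 : z ≠ 0) (x : EuclideanSpace ℝ (Fin n)) :
    (inner ℝ ((‖z‖)⁻¹ • z) x : ℝ) = ‖z‖ * lpr z x := by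
  unfold lpr
  have : ‖z‖ ≠ 0 := norm_ne_zero_iff.2 hz0
  field_simp

lemma zero_mem_interior_star : (0 : EuclideanSpace ℝ (Fin n)) ∈ interior X := by
  simpa using hss 0 h0 0 ⟨le_rfl, zero_lt_one⟩

lemma srad_boundary (hzX : z ∈ X) (hzi : z ∉ interior X) : srad X z = 1 := by
  have h1 : 1 ≤ srad X z := one_le_srad_of_mem h0 hX hzX
  rcases eq_or_lt_of_le h1 with h | h
  · exact h.symm
  · exfalso
    apply hzi
    simpa using smul_mem_interior_of_lt_srad h0 hX hss zero_le_one h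

/-- Chart at a boundary point `z`. -/
def bdChart (hzX : z ∈ X) (hzi : z ∉ interior X) :
    OpenPartialHomeomorph (↥X) (EuclideanHalfSpace n) := by
  have hz0 : z ≠ 0 := fun h => hzi (h ▸ zero_mem_interior_star h0 hX hss)
  have hm : (0:ℝ) < ‖z‖ := norm_pos_iff.2 hz0
  have hu : ‖(‖z‖)⁻¹ • z‖ = 1 := norm_smul_inv_norm hz0
  refine subtypeChart X ⟨z, hzX⟩
    (fun y => flipT ‖z‖ (hhr ((‖z‖)⁻¹ • z - e₀) (gmap X z y)))
    (fun v => gmapInv X z (hhr ((‖z‖)⁻¹ • z - e₀) (flipT ‖z‖ v)))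
    (bdO X z)
    ((fun x => hhr ((‖z‖)⁻¹ • z - e₀) (flipT ‖z‖ x)) ⁻¹' bdT X z)
    (bdO_open z h0 hX hss)
    ((bdT_open z h0 hX hss).preimage ((continuous_hhr _).comp (continuous_flipT _)))
    (((continuous_flipT _).comp (continuous_hhr _)).comp_continuousOn
      (continuousOn_gmap z h0 hX hss))
    ?_ ?_ ?_ ?_ ?_ ?_ ?_
  · -- continuity of the inverse
    apply (continuousOn_gmapInv z h0 hX hss).comp
      (((continuous_hhr _).comp (continuous_flipT _)).continuousOn)
    intro v hv
    exact (Set.mem_preimage.1 hv).1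
  · -- hfU
    intro y hy _
    show hhr _ (flipT ‖z‖ (flipT ‖z‖ (hhr _ (gmap X z y)))) ∈ bdT X z
    rw [flipT_flipT, hhr_invol]
    exact gmap_mem_bdT h0 hX hss hy
  · -- hf0
    intro y hy hyX
    show (0:ℝ) ≤ flipT ‖z‖ (hhr ((‖z‖)⁻¹ • z - e₀) (gmap X z y)) 0
    rw [flipT_coord, hhr_coord0 hu, inner_u_eq_lpr hz0, lpr_gmap hy]
    have h1 : 1 ≤ srad X y := one_le_srad_of_mem h0 hX hyX
    have h2 : (srad X y)⁻¹ ≤ 1 := by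
      rw [inv_le_one₀ (by linarith)]
      exact h1
    nlinarith
  · -- hgO
    intro v hv _
    exact (Set.mem_preimage.1 hv).2
  · -- hgX
    intro v hv hv0
    have hw : hhr ((‖z‖)⁻¹ • z - e₀) (flipT ‖z‖ v) ∈ bdW X z := (Set.mem_preimage.1 hv).1
    rw [gmapInv_mem_X_iff h0 hX hss hw]
    have hkey : ‖z‖ * lpr z (hhr ((‖z‖)⁻¹ • z - e₀) (flipT ‖z‖ v)) = ‖z‖ - v 0 := by
      rw [← inner_u_eq_lpr hz0, inner_u_hhr hu, flipT_coord]
    nlinarith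
  · -- hgf
    intro y hy _
    show gmapInv X z (hhr _ (flipT ‖z‖ (flipT ‖z‖ (hhr _ (gmap X z y))))) = y
    rw [flipT_flipT, hhr_invol]
    exact gmapInv_gmap h0 hX hss hy
  · -- hfg
    intro v hv _
    have hw : hhr ((‖z‖)⁻¹ • z - e₀) (flipT ‖z‖ v) ∈ bdW X z := (Set.mem_preimage.1 hv).1
    show flipT ‖z‖ (hhr _ (gmap X z (gmapInv X z (hhr _ (flipT ‖z‖ v))))) = v
    rw [gmap_gmapInv h0 hX hss hw, hhr_invol, flipT_flipT]

lemma mem_bdChart_source (hzX : z ∈ X) (hzi : z ∉ interior X) :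
    (⟨z, hzX⟩ : ↥X) ∈ (bdChart h0 hX hss hzX hzi).source := by
  have hz0 : z ≠ 0 := fun h => hzi (h ▸ zero_mem_interior_star h0 hX hss)
  show z ∈ bdO X z
  refine ⟨?_, ?_⟩
  · rw [lpr_self z hz0]
    norm_num
  · rw [srad_boundary h0 hX hss hzX hzi]
    norm_num

end TheChart

end BdChart


/-- Main construction: a closed strongly star-shaped (about `0`) subset of Euclidean space is
charted on the half-space. -/
def star_chartedSpace {X : Set (EuclideanSpace ℝ (Fin n))}
    (h0 : (0 : EuclideanSpace ℝ (Fin n)) ∈ X) (hX : IsClosed X)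
    (hss : ∀ x ∈ X, ∀ t ∈ Set.Ico (0:ℝ) 1, t • x ∈ interior X) :
    ChartedSpace (EuclideanHalfSpace n) ↥X := by
  classical
  have hchart : ∀ y : ↥X, ∃ c : OpenPartialHomeomorph (↥X) (EuclideanHalfSpace n), y ∈ c.source := by
    intro y
    by_cases h : y.1 ∈ interior X
    · obtain ⟨r, hr, hball⟩ := Metric.isOpen_iff.1 isOpen_interior y.1 h
      exact ⟨intChart X y hr hball, mem_intChart_source X y hr hball y.2⟩
    · exact ⟨bdChart h0 hX hss y.2 h, mem_bdChart_source h0 hX hss y.2 h⟩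
  choose c hc using hchart
  exact ⟨Set.range c, c, hc, fun y => Set.mem_range_self y⟩

end ChartAux

/-- Transfer a charted space structure along a homeomorphism. -/
def chartedSpaceOfHomeomorph {M N H' : Type*} [TopologicalSpace M] [TopologicalSpace N]
    [TopologicalSpace H'] (e : M ≃ₜ N) (c : ChartedSpace H' N) : ChartedSpace H' M where
  atlas := Set.range fun x : M => e.toOpenPartialHomeomorph.trans (c.chartAt (e x))
  chartAt x := e.toOpenPartialHomeomorph.trans (c.chartAt (e x))
  mem_chart_source x := by
    rw [OpenPartialHomeomorph.trans_source]
    refine ⟨by simp, ?_⟩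
    show e.toOpenPartialHomeomorph x ∈ (c.chartAt (e x)).source
    have : e.toOpenPartialHomeomorph x = e x := rfl
    rw [this]
    exact c.mem_chart_source (e x)
  chart_mem_atlas x := Set.mem_range_self x


theorem stmt9 {V : Type*} [NormedAddCommGroup V] [NormedSpace ℝ V] [FiniteDimensional ℝ V]
    [NeZero (Module.finrank ℝ V)]
    (X : Set V) (x0 : V) (hx0 : x0 ∈ X) (hX : IsClosed X)
    (hss : ∀ x ∈ X, ∀ t ∈ Set.Ico (0:ℝ) 1, x0 + t • (x - x0) ∈ interior X) :
    Nonempty (ChartedSpace (EuclideanHalfSpace (Module.finrank ℝ V)) ↥X) := by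
  let φ : V ≃ₜ EuclideanSpace ℝ (Fin (Module.finrank ℝ V)) :=
    (Homeomorph.addRight (-x0)).trans (toEuclidean (E := V)).toHomeomorph
  have hφ : ∀ w : V, φ w = toEuclidean (w - x0) := fun w => by
    simp only [φ, Homeomorph.trans_apply, Homeomorph.coe_addRight,
      ContinuousLinearEquiv.coe_toHomeomorph]
    rw [sub_eq_add_neg]
  have h0' : (0 : EuclideanSpace ℝ (Fin (Module.finrank ℝ V))) ∈ φ '' X := by
    refine ⟨x0, hx0, ?_⟩
    rw [hφ, sub_self, map_zero]
  have hY : IsClosed (φ '' X) := (Homeomorph.isClosed_image φ).2 hX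
  have hss' : ∀ x' ∈ φ '' X, ∀ t ∈ Set.Ico (0:ℝ) 1, t • x' ∈ interior (φ '' X) := by
    rintro _ ⟨x, hx, rfl⟩ t ht
    rw [← Homeomorph.image_interior]
    refine ⟨x0 + t • (x - x0), hss x hx t ht, ?_⟩
    rw [hφ, hφ, add_sub_cancel_left, map_smul]
  have hc : ChartedSpace (EuclideanHalfSpace (Module.finrank ℝ V)) ↥(φ '' X) :=
    star_chartedSpace h0' hY hss'
  exact ⟨chartedSpaceOfHomeomorph (φ.image X) hc⟩
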